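/- The Demazure operator δ satisfies δ(1) = 1 and δ ∘ δ = δ, i.e. δ(δ(u)) = δ(u) for all u ∈ ℤ[M]. -/

import Mathlib

open AddMonoidAlgebra

noncomputable section

/-- The reflection `λ ↦ λ - c(λ) • α` associated to a root `α` and coroot `c`,
as an additive homomorphism of the weight lattice `M`. -/
def demazureReflection {M : Type*} [AddCommGroup M] (α : M) (c : M →+ ℤ) : M →+ M where
  toFun := fun lam => lam - c lam • α
  map_zero' := by simp
  map_add' := fun x y => by simp only [map_add, add_smul]; abel

/-- The ring endomorphism of the group algebra `ℤ[M]` induced by the reflection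
`s(λ) = λ - c(λ)·α`; it sends `e^λ` to `e^{s(λ)}`. -/
def demazureReflectionAlg {M : Type*} [AddCommGroup M] (α : M) (c : M →+ ℤ) :
    AddMonoidAlgebra ℤ M →+* AddMonoidAlgebra ℤ M :=
  mapDomainRingHom ℤ (demazureReflection α c)
/-- The Demazure operator satisfies δ(1) = 1 and δ ∘ δ = δ. -/
theorem demazure_one_and_idempotent {M : Type*} [AddCommGroup M]
    [Module.Free ℤ M] [Module.Finite ℤ M]
    (α : M) (hα : α ≠ 0) (c : M →+ ℤ) (hc : c α = 2)
    (δ : AddMonoidAlgebra ℤ M →ₗ[ℤ] AddMonoidAlgebra ℤ M)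
    (hδ : ∀ u : AddMonoidAlgebra ℤ M,
      (1 - single (-α) 1) * δ u = u - single (-α) 1 * demazureReflectionAlg α c u) :
    δ 1 = 1 ∧ ∀ u : AddMonoidAlgebra ℤ M, δ (δ u) = δ u := by
  classical
  haveI : UniqueSums M := by
    obtain ⟨ι, b⟩ := Module.Free.exists_basis (R := ℤ) (M := M)
    exact UniqueSums.of_injective_addHom b.repr.toLinearMap.toAddMonoidHom.toAddHom
      b.repr.injective inferInstance
  set E : AddMonoidAlgebra ℤ M := single (-α) 1 with hE
  set F : AddMonoidAlgebra ℤ M := single α 1 with hF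
  set S := demazureReflectionAlg α c with hS
  have hEne : (1 : AddMonoidAlgebra ℤ M) - E ≠ 0 := by
    rw [sub_ne_zero]
    intro h
    rw [AddMonoidAlgebra.one_def, hE] at h
    have h1 := (AddMonoidAlgebra.single_left_inj one_ne_zero).mp h
    exact hα (by simpa using h1.symm)
  have hs : ∀ lam : M, demazureReflection α c lam = lam - c lam • α := fun _ => rfl
  have hSsingle : ∀ (lam : M) (r : ℤ), S (single lam r) = single (lam - c lam • α) r := by
    intro lam r
    simp [hS, demazureReflectionAlg, mapDomainRingHom, Finsupp.mapDomain_single, hs]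
  have hSE : S E = F := by
    rw [hE, hSsingle, hF]
    congr 1
    rw [map_neg, hc]
    abel
  have hSS : ∀ x : AddMonoidAlgebra ℤ M, S (S x) = x := by
    intro x
    apply AddMonoidAlgebra.coeff_injective
    show (Finsupp.mapDomain _) (Finsupp.mapDomain _ x.coeff) = x.coeff
    rw [← Finsupp.mapDomain_comp]
    convert Finsupp.mapDomain_id
    funext lam
    show demazureReflection α c (demazureReflection α c lam) = lam
    rw [hs, hs, map_sub, map_zsmul, hc]
    simp only [smul_eq_mul]
    module
  have hEF : E * F = 1 := by
    rw [hE, hF, AddMonoidAlgebra.single_mul_single, AddMonoidAlgebra.one_def]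
    simp
  have key : ∀ v u : AddMonoidAlgebra ℤ M,
      (1 - E) * v = u - E * S u → δ v = v ∧ S v = v := by
    intro v u hv
    have eqn2 : (1 - F) * S v = S u - F * u := by
      have h2 := congrArg S hv
      simpa [map_mul, map_sub, map_one, hSE, hSS u] using h2
    have h3 : (1 - E) * S v = (1 - E) * v := by
      linear_combination (-E) * eqn2 - hv + (u - S v) * hEF
    have hSv : S v = v := mul_left_cancel₀ hEne h3
    refine ⟨?_, hSv⟩
    have h4 : (1 - E) * δ v = (1 - E) * v := by
      rw [hδ v, hSv]; ring
    exact mul_left_cancel₀ hEne h4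
  constructor
  · have h1 : (1 - E) * (1 : AddMonoidAlgebra ℤ M) = 1 - E * S 1 := by
      rw [map_one]; ring
    have := hδ 1
    have hδ1 : δ 1 = 1 := mul_left_cancel₀ hEne (by rw [this, map_one, mul_one, mul_one])
    exact hδ1
  · intro u
    have hu := hδ u
    exact (key (δ u) u hu).1
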